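/- Let Σ be a finite monoid and W a real vector space. Suppose F : (Σ → W) → (Σ → W) is any (possibly nonlinear) map that is equivariant with respect to the right regular representation, i.e., F(A_σ x) = A_σ F(x) for all σ ∈ Σ and all x : Σ → W, where (A_σ x)(τ) = x(τσ). Then for every τ ∈ Σ and all x, x' : Σ → W satisfying x(στ) = x'(στ) for every σ ∈ Σ, one has F(x)(τ) = F(x')(τ). In particular, the τ-component of F(x) depends only on the values x(σ) for σ ⊵ τ, where σ' ⊵ τ means there exists ρ ∈ Σ with ρτ = σ'. -/
import Mathlib

/-- If a (possibly nonlinear) map `F` on `M → W` is equivariant with respect to the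
right regular representation `(A_σ x) τ = x (τ * σ)` of the finite monoid `M`, then the
`τ`-component of `F x` depends only on the values `x (σ * τ)`, i.e. on the coordinates
of the cells `σ' ⊵ τ` (those `σ'` with `ρ * τ = σ'` for some `ρ`). -/
theorem equivariant_component_depends_upstream
    (M : Type*) [Monoid M] [Fintype M]
    (W : Type*) [AddCommGroup W] [Module ℝ W]
    (F : (M → W) → (M → W))
    (hF : ∀ (σ : M) (x : M → W), F (fun τ => x (τ * σ)) = fun τ => F x (τ * σ)) :
    ∀ (τ : M) (x x' : M → W),
      (∀ σ : M, x (σ * τ) = x' (σ * τ)) → F x τ = F x' τ := by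
  intro τ x x' h
  have h1 := hF τ x
  have h2 := hF τ x'
  have hxy : (fun σ => x (σ * τ)) = (fun σ => x' (σ * τ)) := funext h
  have := h1.symm.trans (hxy ▸ h2)
  have := congrFun this 1
  simpa using this
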